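/- Suppose θ > 0 and L > L_d(θ). Then there exist X_M and X_m with 0 < X_M < 2θ/5 < X_m < θ such that f′(X) ≥ 0 for all X ∈ (0, X_M] ∪ [X_m, θ) and f′(X) < 0 for all X ∈ (X_M, X_m). Moreover X_m is the unique X ∈ (2θ/5, θ) with f′(X) = 0, and every global minimizer of f on D belongs to the two-point set {0, min(θ̃⁺, X_m)}. -/

import Mathlib

open Real Set

/-- The auxiliary energy `f(X) = (θ - X)^(-1/2) - L·X²` for `0 < X < θ`, with `f(0) = 0`. -/
noncomputable def f (θ L X : ℝ) : ℝ :=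
  if X = 0 then 0 else (θ - X) ^ (-(1:ℝ)/2) - L * X ^ 2

/-- `L_d(θ) = (25/24)·√(5/3)·θ^(-5/2)`. -/
noncomputable def Ld (θ : ℝ) : ℝ := (25/24) * Real.sqrt (5/3) * θ ^ (-(5:ℝ)/2)

/-- `θ* = (5/4)·α^(-1/2)`. -/
noncomputable def θstar (α : ℝ) : ℝ := (5/4) * α ^ (-(1:ℝ)/2)

/-- `L_01(θ) = (5^(5/2)/16)·θ^(-5/2)`. -/
noncomputable def L01 (θ : ℝ) : ℝ := ((5:ℝ) ^ ((5:ℝ)/2) / 16) * θ ^ (-(5:ℝ)/2)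

/-- `L_02(θ) = α^(5/4)·(√α·θ - 1)^(-1/2)`. -/
noncomputable def L02 (α θ : ℝ) : ℝ := α ^ ((5:ℝ)/4) * (Real.sqrt α * θ - 1) ^ (-(1:ℝ)/2)

/-- `L_12(θ) = (2α³θ + 2α²√(α(αθ² - 1)))^(1/2)`. -/
noncomputable def L12 (α θ : ℝ) : ℝ :=
  Real.sqrt (2*α^3*θ + 2*α^2 * Real.sqrt (α*(α*θ^2 - 1)))

/-- The derivative of `f` on `(0, θ)`. -/
noncomputable def g (θ L X : ℝ) : ℝ := (θ - X) ^ (-(3:ℝ)/2) / 2 - 2*L*X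

lemma hasDerivAt_F {θ L X : ℝ} (hX : X < θ) :
    HasDerivAt (fun x => (θ - x) ^ (-(1:ℝ)/2) - L * x ^ 2) (g θ L X) X := by
  have h1 : HasDerivAt (fun x : ℝ => θ - x) (-1) X := by
    simpa using (hasDerivAt_id X).const_sub θ
  have h2 : HasDerivAt (fun y : ℝ => y ^ (-(1:ℝ)/2)) ((-(1:ℝ)/2) * (θ - X) ^ (-(1:ℝ)/2 - 1)) (θ - X) :=
    Real.hasDerivAt_rpow_const (Or.inl (sub_ne_zero.mpr hX.ne'))
  have h3 := h2.comp X h1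
  have h4 : HasDerivAt (fun x : ℝ => L * x ^ 2) (2 * L * X) X := by
    simpa [mul_comm, mul_assoc, mul_left_comm] using ((hasDerivAt_pow 2 X).const_mul L)
  have h5 := h3.sub h4
  have he : (-(1:ℝ)/2 - 1) = (-(3:ℝ)/2) := by norm_num
  rw [he] at h5
  refine h5.congr_deriv ?_
  unfold g; ring

lemma deriv_f_eq {θ L X : ℝ} (h0 : 0 < X) (hX : X < θ) :
    deriv (f θ L) X = g θ L X := by
  have hev : f θ L =ᶠ[nhds X] (fun x => (θ - x) ^ (-(1:ℝ)/2) - L * x ^ 2) := by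
    filter_upwards [eventually_ne_nhds h0.ne'] with y hy
    simp [f, hy]
  rw [hev.deriv_eq, (hasDerivAt_F hX).deriv]

lemma continuousAt_f {θ L X : ℝ} (h0 : 0 < X) (hX : X < θ) :
    ContinuousAt (f θ L) X := by
  have hev : f θ L =ᶠ[nhds X] (fun x => (θ - x) ^ (-(1:ℝ)/2) - L * x ^ 2) := by
    filter_upwards [eventually_ne_nhds h0.ne'] with y hy
    simp [f, hy]
  exact ((hasDerivAt_F hX).continuousAt).congr hev.symm

lemma hasDerivAt_g {θ L X : ℝ} (hX : X < θ) :
    HasDerivAt (g θ L) ((θ - X) ^ (-(5:ℝ)/2) * (3/4) - 2*L) X := by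
  have h1 : HasDerivAt (fun x : ℝ => θ - x) (-1) X := by
    simpa using (hasDerivAt_id X).const_sub θ
  have h2 : HasDerivAt (fun y : ℝ => y ^ (-(3:ℝ)/2)) ((-(3:ℝ)/2) * (θ - X) ^ (-(3:ℝ)/2 - 1)) (θ - X) :=
    Real.hasDerivAt_rpow_const (Or.inl (sub_ne_zero.mpr hX.ne'))
  have h3 := (h2.comp X h1).div_const 2
  have h4 : HasDerivAt (fun x : ℝ => 2*L*x) (2*L) X := by
    simpa using (hasDerivAt_id X).const_mul (2*L)
  have h5 := h3.sub h4
  have he : (-(3:ℝ)/2 - 1) = (-(5:ℝ)/2) := by norm_num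
  rw [he] at h5
  refine h5.congr_deriv ?_
  ring

lemma g_strictConvexOn {θ L : ℝ} : StrictConvexOn ℝ (Ioo 0 θ) (g θ L) := by
  apply StrictMonoOn.strictConvexOn_of_deriv (convex_Ioo 0 θ)
  · intro x hx
    exact (hasDerivAt_g hx.2).continuousAt.continuousWithinAt
  · rw [interior_Ioo]
    intro x hx y hy hxy
    rw [(hasDerivAt_g hx.2).deriv, (hasDerivAt_g hy.2).deriv]
    have h1 : (θ - x) ^ (-(5:ℝ)/2) < (θ - y) ^ (-(5:ℝ)/2) := by
      apply Real.rpow_lt_rpow_of_neg (by linarith [hy.2]) (by linarith) (by norm_num)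
    linarith

/-- Key convexity estimate: if `g ≤ 0` at two points of `(0, θ)`, it is negative in between. -/
lemma g_key {θ L a b c : ℝ} (ha : 0 < a) (hc : c < θ) (hab : a < b) (hbc : b < c)
    (hga : g θ L a ≤ 0) (hgc : g θ L c ≤ 0) : g θ L b < 0 := by
  have hac : a < c := hab.trans hbc
  set t : ℝ := (c - b)/(c - a) with ht_def
  set s : ℝ := (b - a)/(c - a) with hs_def
  have hca : (0:ℝ) < c - a := by linarith
  have ht : 0 < t := div_pos (by linarith) hca
  have hs : 0 < s := div_pos (by linarith) hca
  have hts : t + s = 1 := by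
    rw [ht_def, hs_def, ← add_div]
    field_simp
    ring
  have hcomb : t • a + s • c = b := by
    simp only [smul_eq_mul, ht_def, hs_def]
    field_simp
    ring
  have haI : a ∈ Ioo (0:ℝ) θ := ⟨ha, by linarith⟩
  have hcI : c ∈ Ioo (0:ℝ) θ := ⟨by linarith, hc⟩
  have := (g_strictConvexOn (θ := θ) (L := L)).2 haI hcI (ne_of_lt hac) ht hs hts
  rw [hcomb] at this
  simp only [smul_eq_mul] at this
  nlinarith

lemma g_at_25 {θ L : ℝ} (hθ : 0 < θ) (hL : Ld θ < L) : g θ L (2*θ/5) < 0 := by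
  have hs : (0:ℝ) < Real.sqrt (5/3) := Real.sqrt_pos.mpr (by norm_num)
  have ht : (0:ℝ) < θ ^ (-(3:ℝ)/2) := Real.rpow_pos_of_pos hθ _
  have h1 : θ - 2*θ/5 = (3/5) * θ := by ring
  have h2 : ((3:ℝ)/5 * θ) ^ (-(3:ℝ)/2) = (3/5:ℝ) ^ (-(3:ℝ)/2) * θ ^ (-(3:ℝ)/2) :=
    Real.mul_rpow (by norm_num) hθ.le
  have h3 : (3/5:ℝ) ^ (-(3:ℝ)/2) = (5/3:ℝ) * Real.sqrt (5/3) := by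
    have e1 : ((3:ℝ)/5) = ((5:ℝ)/3)⁻¹ := by norm_num
    rw [e1, Real.inv_rpow (by norm_num), ← Real.rpow_neg (by norm_num)]
    have e2 : -(-(3:ℝ)/2) = 1 + (1/2:ℝ) := by norm_num
    rw [e2, Real.rpow_add (by norm_num), Real.rpow_one, ← Real.sqrt_eq_rpow]
  have h4 : θ ^ (-(5:ℝ)/2) * θ = θ ^ (-(3:ℝ)/2) := by
    have h := Real.rpow_add hθ (-(5:ℝ)/2) 1
    rw [Real.rpow_one] at h
    rw [← h]
    norm_num
  have hLd : Ld θ * θ = (25/24) * Real.sqrt (5/3) * θ ^ (-(3:ℝ)/2) := by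
    rw [Ld, mul_assoc, h4]
  have hLθ : (25/24) * Real.sqrt (5/3) * θ ^ (-(3:ℝ)/2) < L * θ := by
    rw [← hLd]
    exact mul_lt_mul_of_pos_right hL hθ
  rw [g, h1, h2, h3]
  nlinarith

lemma g_cont {θ L a b : ℝ} (hb : b < θ) : ContinuousOn (g θ L) (Icc a b) :=
  fun x hx => (hasDerivAt_g (lt_of_le_of_lt hx.2 hb)).continuousAt.continuousWithinAt

lemma exists_zeros {θ L : ℝ} (hθ : 0 < θ) (hL0 : 0 < L) (hL : Ld θ < L) :
    ∃ XM Xm : ℝ, 0 < XM ∧ XM < 2*θ/5 ∧ 2*θ/5 < Xm ∧ Xm < θ ∧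
      g θ L XM = 0 ∧ g θ L Xm = 0 := by
  set X₀ : ℝ := min (θ ^ (-(3:ℝ)/2)/(8*L)) (θ/5) with hX0def
  have htp : (0:ℝ) < θ ^ (-(3:ℝ)/2) := Real.rpow_pos_of_pos hθ _
  have hX0pos : 0 < X₀ := lt_min (by positivity) (by linarith)
  have hX0le : X₀ ≤ θ/5 := min_le_right _ _
  have hX0lt : X₀ < 2*θ/5 := by linarith
  have hgX0 : 0 < g θ L X₀ := by
    have h1 : (0:ℝ) < θ - X₀ := by linarith
    have h2 : θ ^ (-(3:ℝ)/2) ≤ (θ - X₀) ^ (-(3:ℝ)/2) :=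
      Real.rpow_le_rpow_of_nonpos h1 (by linarith) (by norm_num)
    have h3 : 2*L*X₀ ≤ θ ^ (-(3:ℝ)/2)/4 := by
      have := min_le_left (θ ^ (-(3:ℝ)/2)/(8*L)) (θ/5)
      rw [← hX0def] at this
      calc 2*L*X₀ ≤ 2*L*(θ ^ (-(3:ℝ)/2)/(8*L)) := by nlinarith
        _ = θ ^ (-(3:ℝ)/2)/4 := by field_simp; ring
    rw [g]; linarith
  set δ : ℝ := min ((8*L*θ) ^ (-(2:ℝ)/3)) (θ/2) with hδdef
  have hδpos : 0 < δ := lt_min (Real.rpow_pos_of_pos (by positivity) _) (by linarith)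
  have hδle : δ ≤ θ/2 := min_le_right _ _
  set X₁ : ℝ := θ - δ with hX1def
  have hX1lt : X₁ < θ := by simp only [hX1def]; linarith
  have hX1gt : 2*θ/5 < X₁ := by simp only [hX1def]; linarith
  have hgX1 : 0 < g θ L X₁ := by
    have h1 : θ - X₁ = δ := by simp [hX1def]
    have h2 : ((8*L*θ) ^ (-(2:ℝ)/3)) ^ (-(3:ℝ)/2) ≤ δ ^ (-(3:ℝ)/2) :=
      Real.rpow_le_rpow_of_nonpos hδpos (min_le_left _ _) (by norm_num)
    have h3 : ((8*L*θ) ^ (-(2:ℝ)/3)) ^ (-(3:ℝ)/2) = 8*L*θ := by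
      rw [← Real.rpow_mul (by positivity)]
      norm_num
    rw [h3] at h2
    rw [g, h1]
    nlinarith
  obtain ⟨XM, hXMmem, hgXM⟩ : ∃ XM ∈ Ioo X₀ (2*θ/5), g θ L XM = 0 := by
    have hsub := intermediate_value_Ioo' (le_of_lt hX0lt)
      (g_cont (θ := θ) (L := L) (a := X₀) (b := 2*θ/5) (by linarith))
    have : (0:ℝ) ∈ Ioo (g θ L (2*θ/5)) (g θ L X₀) := ⟨g_at_25 hθ hL, hgX0⟩
    obtain ⟨XM, hmem, heq⟩ := hsub this
    exact ⟨XM, hmem, heq⟩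
  obtain ⟨Xm, hXmmem, hgXm⟩ : ∃ Xm ∈ Ioo (2*θ/5) X₁, g θ L Xm = 0 := by
    have hsub := intermediate_value_Ioo (le_of_lt hX1gt)
      (g_cont (θ := θ) (L := L) (a := 2*θ/5) (b := X₁) hX1lt)
    have : (0:ℝ) ∈ Ioo (g θ L (2*θ/5)) (g θ L X₁) := ⟨g_at_25 hθ hL, hgX1⟩
    obtain ⟨Xm, hmem, heq⟩ := hsub this
    exact ⟨Xm, hmem, heq⟩
  exact ⟨XM, Xm, hX0pos.trans hXMmem.1, hXMmem.2, hXmmem.1, hXmmem.2.trans hX1lt,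
    hgXM, hgXm⟩

/-- If `θ > 0` and `L > L_d(θ)`, there exist `0 < X_M < 2θ/5 < X_m < θ` with
`f' ≥ 0` on `(0, X_M] ∪ [X_m, θ)`, `f' < 0` on `(X_M, X_m)`, `X_m` is the unique zero of
`f'` in `(2θ/5, θ)`, and every global minimizer of `f` on `D` lies in `{0, min(θ̃⁺, X_m)}`. -/
theorem stmt_1 (α θ L : ℝ) (hα : 0 < α) (hθ : 0 < θ) (hL0 : 0 < L) (hL : Ld θ < L) :
    ∃ XM Xm : ℝ, 0 < XM ∧ XM < 2*θ/5 ∧ 2*θ/5 < Xm ∧ Xm < θ ∧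
      (∀ X ∈ Ioc (0:ℝ) XM, 0 ≤ deriv (f θ L) X) ∧
      (∀ X ∈ Ico Xm θ, 0 ≤ deriv (f θ L) X) ∧
      (∀ X ∈ Ioo XM Xm, deriv (f θ L) X < 0) ∧
      (∀ X ∈ Ioo (2*θ/5) θ, (deriv (f θ L) X = 0 ↔ X = Xm)) ∧
      (∀ X ∈ Icc (0:ℝ) (max (θ - α^2/L^2) 0),
        (∀ Y ∈ Icc (0:ℝ) (max (θ - α^2/L^2) 0), f θ L X ≤ f θ L Y) →
        (X = 0 ∨ X = min (max (θ - α^2/L^2) 0) Xm)) := by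
  obtain ⟨XM, Xm, hXM0, hXM25, h25Xm, hXmθ, hgXM, hgXm⟩ := exists_zeros hθ hL0 hL
  have hXMXm : XM < Xm := by linarith
  have hXm0 : 0 < Xm := by linarith
  -- sign facts for g
  have hneg : ∀ X ∈ Ioo XM Xm, g θ L X < 0 := fun X hX =>
    g_key hXM0 hXmθ hX.1 hX.2 hgXM.le hgXm.le
  have hposL : ∀ X ∈ Ioc (0:ℝ) XM, 0 ≤ g θ L X := by
    intro X hX
    rcases eq_or_lt_of_le hX.2 with h | h
    · rw [h, hgXM]
    · by_contra hc
      push_neg at hc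
      have := g_key hX.1 hXmθ h hXMXm hc.le hgXm.le
      rw [hgXM] at this
      exact lt_irrefl 0 this
  have hposR : ∀ X ∈ Ico Xm θ, 0 ≤ g θ L X := by
    intro X hX
    rcases eq_or_lt_of_le hX.1 with h | h
    · rw [← h, hgXm]
    · by_contra hc
      push_neg at hc
      have := g_key hXM0 hX.2 hXMXm h hgXM.le hc.le
      rw [hgXm] at this
      exact lt_irrefl 0 this
  have hstrictR : ∀ X ∈ Ioo Xm θ, 0 < g θ L X := by
    intro X hX
    by_contra hc
    push_neg at hc
    have := g_key (by linarith : (0:ℝ) < 2*θ/5) hX.2 h25Xm hX.1 (g_at_25 hθ hL).le hc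
    rw [hgXm] at this
    exact lt_irrefl 0 this
  have hzero : ∀ X ∈ Ioo (0:ℝ) θ, g θ L X = 0 → X = XM ∨ X = Xm := by
    intro X hX hgX
    rcases lt_trichotomy X XM with h | h | h
    · exfalso
      have := g_key hX.1 (by linarith : 2*θ/5 < θ) h hXM25 hgX.le (g_at_25 hθ hL).le
      rw [hgXM] at this
      exact lt_irrefl 0 this
    · exact Or.inl h
    · rcases lt_trichotomy X Xm with h' | h' | h'
      · exact absurd hgX (ne_of_lt (hneg X ⟨h, h'⟩))
      · exact Or.inr h'
      · exact absurd hgX (ne_of_gt (hstrictR X ⟨h', hX.2⟩))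
  refine ⟨XM, Xm, hXM0, hXM25, h25Xm, hXmθ, ?_, ?_, ?_, ?_, ?_⟩
  · intro X hX
    rw [deriv_f_eq hX.1 (by linarith [hX.2] : X < θ)]
    exact hposL X hX
  · intro X hX
    rw [deriv_f_eq (by linarith [hX.1] : 0 < X) hX.2]
    exact hposR X hX
  · intro X hX
    rw [deriv_f_eq (by linarith [hX.1] : 0 < X) (by linarith [hX.2] : X < θ)]
    exact hneg X hX
  · intro X hX
    rw [deriv_f_eq (by linarith [hX.1] : 0 < X) hX.2]
    constructor
    · intro hgX
      rcases hzero X ⟨by linarith [hX.1], hX.2⟩ hgX with h | h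
      · exact absurd h (by linarith [hX.1])
      · exact h
    · intro h
      rw [h, hgXm]
  · -- minimizers
    intro X hX hmin
    by_contra hcon
    push_neg at hcon
    obtain ⟨hX0, hXmin⟩ := hcon
    set M : ℝ := max (θ - α^2/L^2) 0 with hMdef
    have hXpos : 0 < X := lt_of_le_of_ne hX.1 (Ne.symm hX0)
    have hMθ : M < θ := by
      apply max_lt _ hθ
      have : 0 < α^2/L^2 := by positivity
      linarith
    have hXM' : X ≤ M := hX.2
    rcases eq_or_lt_of_le hXM' with hXeqM | hXltM
    · -- X = M, so Xm < M and f is strictly increasing on [Xm, M]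
      have hXmM : Xm < M := by
        rcases le_or_gt M Xm with h | h
        · exact absurd (by rw [hXeqM, min_eq_left h] : X = min M Xm) hXmin
        · exact h
      have hmono : StrictMonoOn (f θ L) (Icc Xm M) := by
        apply strictMonoOn_of_deriv_pos (convex_Icc Xm M)
        · intro x hx
          exact (continuousAt_f (by linarith [hx.1] : 0 < x)
            (lt_of_le_of_lt hx.2 hMθ)).continuousWithinAt
        · rw [interior_Icc]
          intro x hx
          rw [deriv_f_eq (by linarith [hx.1]) (by linarith [hx.2])]
          exact hstrictR x ⟨hx.1, by linarith [hx.2]⟩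
      have h1 : f θ L Xm < f θ L M :=
        hmono ⟨le_refl Xm, hXmM.le⟩ ⟨hXmM.le, le_refl M⟩ hXmM
      have h2 := hmin Xm ⟨hXm0.le, hXmM.le⟩
      rw [hXeqM] at h2
      linarith
    · -- X < M : interior local min, so g X = 0
      have hloc : IsLocalMin (f θ L) X := by
        have hmem : Ioo (0:ℝ) M ∈ nhds X := Ioo_mem_nhds hXpos hXltM
        filter_upwards [hmem] with y hy
        exact hmin y ⟨hy.1.le, hy.2.le⟩
      have hderiv0 := hloc.deriv_eq_zero
      rw [deriv_f_eq hXpos (by linarith : X < θ)] at hderiv0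
      rcases hzero X ⟨hXpos, by linarith⟩ hderiv0 with hXeq | hXeq
      · -- X = XM: f strictly decreasing on [XM, min M Xm]
        set m : ℝ := min M Xm with hmdef
        have hXMm : XM < m := by
          rw [hXeq] at hXltM
          exact lt_min hXltM (by linarith)
        have hmθ : m < θ := lt_of_le_of_lt (min_le_left _ _) hMθ
        have hanti : StrictAntiOn (f θ L) (Icc XM m) := by
          apply strictAntiOn_of_deriv_neg (convex_Icc XM m)
          · intro x hx
            exact (continuousAt_f (by linarith [hx.1] : 0 < x)
              (lt_of_le_of_lt hx.2 hmθ)).continuousWithinAt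
          · rw [interior_Icc]
            intro x hx
            rw [deriv_f_eq (by linarith [hx.1]) (by linarith [hx.2])]
            exact hneg x ⟨hx.1, lt_of_lt_of_le hx.2 (min_le_right _ _)⟩
        have h1 : f θ L m < f θ L XM :=
          hanti ⟨le_refl XM, hXMm.le⟩ ⟨hXMm.le, le_refl m⟩ hXMm
        have hm0 : (0:ℝ) ≤ m := le_min (le_max_right _ 0) hXm0.le
        have h2 := hmin m ⟨hm0, min_le_left _ _⟩
        rw [hXeq] at h2
        linarith
      · -- X = Xm < M, so min M Xm = Xm = X, contradiction
        apply hXmin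
        rw [hXeq]
        exact (min_eq_right (by rw [← hXeq]; exact hXltM.le)).symm
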